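/- arXiv:2104.00524 — 5 statements merged into one kernel-verified Lean document; each statement's English description precedes it below -/
import Mathlib

section
/- For every positive integer p, Σ_{k=1}^{p} (−1)^{k−1} · (2p)!/(2p+1−2k)! · η(2k)/π^{2k} = 1/(2(2p+1)), where η is the Dirichlet eta function η(s) = Σ_{n≥1} (−1)^{n−1}/n^s. -/
open scoped BigOperators
open Real

noncomputable def zetaR (s : ℕ) : ℝ := ∑' n : ℕ, 1 / ((n : ℝ) + 1) ^ s
noncomputable def etaR (s : ℕ) : ℝ := ∑' n : ℕ, (-1 : ℝ) ^ n / ((n : ℝ) + 1) ^ s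
noncomputable def betaR (s : ℕ) : ℝ := ∑' m : ℕ, (-1 : ℝ) ^ m / (2 * (m : ℝ) + 1) ^ s

section Aux

open Finset

private lemma sum_range_even_odd (f : ℕ → ℚ) (m : ℕ) :
    ∑ j ∈ range (2 * m), f j = ∑ k ∈ range m, f (2 * k) + ∑ k ∈ range m, f (2 * k + 1) := by
  induction m with
  | zero => simp
  | succ m ih =>
    have h : 2 * (m + 1) = (2 * m) + 1 + 1 := by ring
    rw [h, sum_range_succ, sum_range_succ, sum_range_succ, sum_range_succ, ih]
    have : 2 * m + 1 + 1 = 2 * (m + 1) := by ring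
    ring

private lemma bernoulli_eval_expand (n : ℕ) (x : ℚ) :
    (Polynomial.bernoulli n).eval x
      = ∑ i ∈ Finset.range (n + 1), _root_.bernoulli i * (n.choose i : ℚ) * x ^ (n - i) := by
  simp [Polynomial.bernoulli, Polynomial.eval_finset_sum]

private lemma bernoulli_eval_two (n : ℕ) (hn : n ≠ 1) :
    (Polynomial.bernoulli n).eval (2 : ℚ) = _root_.bernoulli n + n := by
  have h := Polynomial.bernoulli_eval_one_add n 1
  norm_num at h
  rw [h, bernoulli_eq_bernoulli'_of_ne_one hn]

private lemma sum_choose_bernoulli_two (m : ℕ) (hm : 2 ≤ m) :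
    ∑ i ∈ Finset.range m, _root_.bernoulli i * (m.choose i : ℚ) * 2 ^ (m - i) = m := by
  have h1 := bernoulli_eval_expand m 2
  rw [Finset.sum_range_succ, bernoulli_eval_two m (by omega)] at h1
  simp at h1
  linarith [h1]

private lemma bernoulli_eval_half (n : ℕ) :
    (Polynomial.bernoulli n).eval (2⁻¹ : ℚ) * 2 ^ n
      = 2 * _root_.bernoulli n - 2 ^ n * _root_.bernoulli n := by
  induction n using Nat.strong_induction_on with
  | _ n ih =>
    rcases Nat.eq_zero_or_pos n with rfl | hn
    · norm_num
    -- recurrence from Polynomial.sum_bernoulli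
    have h := congrArg (Polynomial.eval (2⁻¹ : ℚ)) (Polynomial.sum_bernoulli n)
    simp only [Polynomial.eval_finset_sum, Polynomial.eval_smul, Polynomial.eval_monomial,
      smul_eq_mul] at h
    rw [Finset.sum_range_succ, Nat.choose_succ_self_right] at h
    -- known partial sums
    have hA : ∑ k ∈ range n, ((n+1).choose k : ℚ) * _root_.bernoulli k
        = -(((n:ℚ)+1) * _root_.bernoulli n) := by
      have h2 := sum_bernoulli (n+1)
      rw [if_neg (by omega), Finset.sum_range_succ, Nat.choose_succ_self_right] at h2
      push_cast at h2
      linarith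
    have hB : ∑ k ∈ range n, _root_.bernoulli k * ((n+1).choose k : ℚ) * 2 ^ (n + 1 - k)
        = ((n:ℚ)+1) - 2*((n:ℚ)+1)*_root_.bernoulli n := by
      have h2 := sum_choose_bernoulli_two (n+1) (by omega)
      rw [Finset.sum_range_succ, Nat.choose_succ_self_right,
        show n + 1 - n = 1 by omega] at h2
      push_cast at h2
      linarith
    have hsum : (2:ℚ)^(n+1) * ∑ k ∈ range n,
          ((n+1).choose k : ℚ) * (Polynomial.bernoulli k).eval (2⁻¹ : ℚ)
        = 2 * (∑ k ∈ range n, _root_.bernoulli k * ((n+1).choose k : ℚ) * 2 ^ (n + 1 - k))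
          - 2^(n+1) * ∑ k ∈ range n, ((n+1).choose k : ℚ) * _root_.bernoulli k := by
      rw [Finset.mul_sum, Finset.mul_sum, Finset.mul_sum, ← Finset.sum_sub_distrib]
      refine Finset.sum_congr rfl fun k hk => ?_
      have hkn := Finset.mem_range.mp hk
      have e := ih k hkn
      have hpow : (2:ℚ) ^ (n + 1 - k) * 2 ^ k = 2 ^ (n+1) := by
        rw [← pow_add]; congr 1; omega
      linear_combination (((n+1).choose k : ℚ) * 2 ^ (n+1-k)) * e
        - (((n+1).choose k : ℚ) * ((Polynomial.bernoulli k).eval (2⁻¹ : ℚ)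
            + _root_.bernoulli k)) * hpow
    have hhalf : (2⁻¹ : ℚ) ^ n = (2 ^ n)⁻¹ := by rw [inv_pow]
    have h2n : (2:ℚ) ^ n ≠ 0 := by positivity
    have h' : (2:ℚ)^(n+1) * (∑ k ∈ range n,
          ((n+1).choose k : ℚ) * (Polynomial.bernoulli k).eval (2⁻¹ : ℚ)
          + ((n:ℚ)+1) * (Polynomial.bernoulli n).eval (2⁻¹ : ℚ))
        = ((n:ℚ)+1) * 2 := by
      push_cast at h
      rw [h, hhalf, pow_succ]
      field_simp
    rw [mul_add, hsum, hA, hB] at h'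
    have hne : (2 * ((n:ℚ) + 1)) ≠ 0 := by positivity
    apply mul_left_cancel₀ hne
    rw [pow_succ] at h'
    linear_combination h'

private lemma sum_range_odd_split (f : ℕ → ℚ) (m : ℕ) :
    ∑ j ∈ range (2 * m + 1), f j
      = ∑ k ∈ range (m + 1), f (2 * k) + ∑ k ∈ range m, f (2 * k + 1) := by
  rw [sum_range_succ (fun j => f j) (2*m), sum_range_even_odd, sum_range_succ]
  ring

private lemma bernoulli_odd (n : ℕ) (ho : Odd n) (h1 : 1 < n) : _root_.bernoulli n = 0 := by
  rw [bernoulli_eq_bernoulli'_of_ne_one (by omega)]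
  exact bernoulli'_eq_zero_of_odd ho h1

private lemma Icc_to_range (f : ℕ → ℚ) (p : ℕ) :
    ∑ k ∈ Finset.Icc 1 p, f k = ∑ k ∈ range p, f (k + 1) := by
  rw [← Finset.Ico_add_one_right_eq_Icc, Finset.sum_Ico_eq_sum_range]
  simp [add_comm]

private lemma I1 (p : ℕ) (hp : 0 < p) :
    ∑ k ∈ Finset.Icc 1 p, (((2*p+1).choose (2*k) : ℚ)) * _root_.bernoulli (2*k)
      = ((2*p:ℚ)-1)/2 := by
  have h := sum_bernoulli (2*p+1)
  rw [if_neg (by omega), sum_range_odd_split] at h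
  have hodd : ∑ k ∈ range p, ((2*p+1).choose (2*k+1) : ℚ) * _root_.bernoulli (2*k+1)
      = -((2*(p:ℚ)+1)/2) := by
    rw [Finset.sum_eq_single_of_mem 0 (Finset.mem_range.mpr hp)]
    · simp [bernoulli_one]
      push_cast; ring
    · intro b _ hb
      rw [bernoulli_odd (2*b+1) ⟨b, by omega⟩ (by omega), mul_zero]
  have heven : ∑ k ∈ range (p + 1), ((2*p+1).choose (2*k) : ℚ) * _root_.bernoulli (2*k)
      = 1 + ∑ k ∈ Finset.Icc 1 p, (((2*p+1).choose (2*k) : ℚ)) * _root_.bernoulli (2*k) := by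
    rw [Finset.sum_range_succ' (fun k => ((2*p+1).choose (2*k) : ℚ) * _root_.bernoulli (2*k)) p,
      Icc_to_range]
    simp [add_comm]
  rw [heven, hodd] at h
  linarith

private lemma I2 (p : ℕ) (hp : 0 < p) :
    ∑ k ∈ Finset.Icc 1 p, (((2*p+1).choose (2*k) : ℚ)) * _root_.bernoulli (2*k) * 2^(2*k)
      = 2*(p:ℚ) := by
  -- full sum ∑_{j ≤ 2p+1} C(2p+1,j) b_j 2^j = 2^(2p+1) * eval (1/2) = 0
  have hmain : ∑ j ∈ range (2*(p+1)), ((2*p+1).choose j : ℚ) * _root_.bernoulli j * 2^j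
      = 0 := by
    have he := bernoulli_eval_expand (2*p+1) (2⁻¹ : ℚ)
    have h0 := bernoulli_eval_half (2*p+1)
    rw [bernoulli_odd (2*p+1) ⟨p, by omega⟩ (by omega)] at h0
    simp only [mul_zero, sub_zero] at h0
    -- so eval (2⁻¹) * 2^(2p+1) = 0; expand
    rw [he, Finset.sum_mul] at h0
    rw [show 2*(p+1) = 2*p+1+1 by ring]
    rw [← h0]
    refine Finset.sum_congr rfl fun i hi => ?_
    have hi' := Finset.mem_range.mp hi
    have hpow : (2⁻¹:ℚ) ^ (2*p+1-i) * 2 ^ (2*p+1) = 2 ^ i := by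
      have hsplit : (2:ℚ)^(2*p+1) = 2^(2*p+1-i) * 2^i := by
        rw [← pow_add]; congr 1; omega
      rw [inv_pow, hsplit, inv_mul_cancel_left₀ (by positivity)]
    calc ((2*p+1).choose i : ℚ) * _root_.bernoulli i * 2^i
        = _root_.bernoulli i * ((2*p+1).choose i : ℚ) * ((2⁻¹:ℚ) ^ (2*p+1-i) * 2 ^ (2*p+1)) := by
          rw [hpow]; ring
      _ = _root_.bernoulli i * ((2*p+1).choose i : ℚ) * (2⁻¹:ℚ) ^ (2*p+1-i) * 2 ^ (2*p+1) := by
          ring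
  rw [sum_range_even_odd] at hmain
  have hodd : ∑ k ∈ range (p+1), ((2*p+1).choose (2*k+1) : ℚ) * _root_.bernoulli (2*k+1) * 2^(2*k+1)
      = -(2*(p:ℚ)+1) := by
    rw [Finset.sum_eq_single_of_mem 0 (Finset.mem_range.mpr (by omega))]
    · simp [bernoulli_one]
      push_cast; ring
    · intro b _ hb
      rw [bernoulli_odd (2*b+1) ⟨b, by omega⟩ (by omega), mul_zero, zero_mul]
  have heven : ∑ k ∈ range (p + 1), ((2*p+1).choose (2*k) : ℚ) * _root_.bernoulli (2*k) * 2^(2*k)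
      = 1 + ∑ k ∈ Finset.Icc 1 p,
          (((2*p+1).choose (2*k) : ℚ)) * _root_.bernoulli (2*k) * 2^(2*k) := by
    rw [Finset.sum_range_succ'
      (fun k => ((2*p+1).choose (2*k) : ℚ) * _root_.bernoulli (2*k) * 2^(2*k)) p,
      Icc_to_range]
    simp [add_comm]
  rw [heven, hodd] at hmain
  linarith

private lemma keyQ (p : ℕ) (hp : 0 < p) :
    ∑ k ∈ Finset.Icc 1 p, ((2*p+1).choose (2*k) : ℚ) *
        (2^(2*k) * (Polynomial.bernoulli (2*k)).eval (2⁻¹ : ℚ)) = -1 := by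
  have h1 := I1 p hp
  have h2 := I2 p hp
  have hterm : ∀ k ∈ Finset.Icc 1 p, ((2*p+1).choose (2*k) : ℚ) *
        (2^(2*k) * (Polynomial.bernoulli (2*k)).eval (2⁻¹ : ℚ))
      = 2 * (((2*p+1).choose (2*k) : ℚ) * _root_.bernoulli (2*k))
        - ((2*p+1).choose (2*k) : ℚ) * _root_.bernoulli (2*k) * 2^(2*k) := by
    intro k _
    have := bernoulli_eval_half (2*k)
    linear_combination ((2*p+1).choose (2*k) : ℚ) * this
  rw [Finset.sum_congr rfl hterm, Finset.sum_sub_distrib, ← Finset.mul_sum, h1, h2]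
  ring

private lemma keyQ2 (p : ℕ) (hp : 0 < p) :
    ∑ k ∈ Finset.Icc 1 p, ((2*p).factorial : ℚ)/(((2*p+1-2*k)).factorial : ℚ) *
        (2^(2*k-1) * (Polynomial.bernoulli (2*k)).eval (2⁻¹ : ℚ) / ((2*k).factorial : ℚ))
      = -(1/(2*(2*(p:ℚ)+1))) := by
  have hterm : ∀ k ∈ Finset.Icc 1 p, ((2*p).factorial : ℚ)/(((2*p+1-2*k)).factorial : ℚ) *
        (2^(2*k-1) * (Polynomial.bernoulli (2*k)).eval (2⁻¹ : ℚ) / ((2*k).factorial : ℚ))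
      = (((2*p+1).choose (2*k) : ℚ) *
          (2^(2*k) * (Polynomial.bernoulli (2*k)).eval (2⁻¹ : ℚ))) * (2*(2*(p:ℚ)+1))⁻¹ := by
    intro k hk
    obtain ⟨hk1, hk2⟩ := Finset.mem_Icc.mp hk
    have hle : 2*k ≤ 2*p+1 := by omega
    have hch := Nat.cast_choose ℚ hle
    have hfac : ((2*p+1).factorial : ℚ) = (2*p+1) * ((2*p).factorial : ℚ) := by
      rw [show 2*p+1 = (2*p)+1 by rfl, Nat.factorial_succ]; push_cast; ring
    have hpow2 : (2:ℚ)^(2*k) = 2 * 2^(2*k-1) := by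
      have h := pow_succ' (2:ℚ) (2*k-1)
      rw [show (2*k-1)+1 = 2*k by omega] at h
      exact h
    have hf1 : (((2*p+1-2*k)).factorial : ℚ) ≠ 0 := Nat.cast_ne_zero.mpr (Nat.factorial_ne_zero _)
    have hf2 : (((2*k)).factorial : ℚ) ≠ 0 := Nat.cast_ne_zero.mpr (Nat.factorial_ne_zero _)
    have hne : (2*(2*(p:ℚ)+1)) ≠ 0 := by positivity
    rw [hch, hfac, hpow2]
    field_simp
  rw [Finset.sum_congr rfl hterm, ← Finset.sum_mul, keyQ p hp]
  have hne : (2*(2*(p:ℚ)+1)) ≠ 0 := by positivity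
  field_simp

private lemma etaR_eq (k : ℕ) (hk : k ≠ 0) :
    etaR (2 * k) = -((-1:ℝ)^(k+1) * (2*π)^(2*k) / 2 / ((2*k).factorial : ℝ) *
      (((Polynomial.bernoulli (2*k)).eval (2⁻¹:ℚ) : ℚ) : ℝ)) := by
  have hmem : (1/2 : ℝ) ∈ Set.Icc (0:ℝ) 1 := by constructor <;> norm_num
  have h := hasSum_one_div_nat_pow_mul_cos hk hmem
  have hfun : (fun n : ℕ => 1 / (n:ℝ) ^ (2*k) * Real.cos (2 * π * n * (1/2)))
      = fun n : ℕ => 1 / (n:ℝ) ^ (2*k) * (-1)^n := by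
    funext n
    congr 1
    have h1 : 2 * π * (n:ℝ) * (1/2) = (n:ℝ) * π - 0 := by ring
    rw [h1, Real.cos_nat_mul_pi_sub, Real.cos_zero, mul_one]
  have heval : (Polynomial.map (algebraMap ℚ ℝ) (Polynomial.bernoulli (2*k))).eval (1/2 : ℝ)
      = (((Polynomial.bernoulli (2*k)).eval (2⁻¹:ℚ) : ℚ) : ℝ) := by
    have hpt : (1/2 : ℝ) = algebraMap ℚ ℝ (2⁻¹ : ℚ) := by norm_num
    rw [hpt, Polynomial.eval_map, Polynomial.eval₂_at_apply]
    simp [eq_ratCast]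
  rw [hfun, heval] at h
  have hf0 : (1:ℝ)/((0:ℕ):ℝ)^(2*k) * (-1)^(0:ℕ) = 0 := by
    simp [zero_pow (by omega : 2*k ≠ 0)]
  have h2 := (hasSum_nat_add_iff'
    (f := fun n : ℕ => 1/(n:ℝ)^(2*k)*(-1)^n) 1).mpr h
  rw [Finset.range_one, Finset.sum_singleton] at h2
  rw [hf0, sub_zero] at h2
  have h3 := h2.neg
  have hfe : (fun n : ℕ => -(1/(((n+1:ℕ)):ℝ)^(2*k) * (-1)^(n+1)))
      = fun n : ℕ => (-1:ℝ)^n / ((n:ℝ)+1)^(2*k) := by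
    funext n; push_cast; rw [pow_succ]; ring
  rw [hfe] at h3
  unfold etaR
  rw [h3.tsum_eq]

end Aux

theorem stmt1 (p : ℕ) (hp : 0 < p) :
    ∑ k ∈ Finset.Icc 1 p, (-1 : ℝ) ^ (k - 1) *
        (((2 * p).factorial : ℝ) / ((2 * p + 1 - 2 * k).factorial : ℝ)) *
        (etaR (2 * k) / π ^ (2 * k))
      = 1 / (2 * (2 * (p : ℝ) + 1)) := by
  have key := keyQ2 p hp
  have hsum : ∑ k ∈ Finset.Icc 1 p, (-1 : ℝ) ^ (k - 1) *
        (((2 * p).factorial : ℝ) / ((2 * p + 1 - 2 * k).factorial : ℝ)) *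
        (etaR (2 * k) / π ^ (2 * k))
      = ∑ k ∈ Finset.Icc 1 p,
          -(((((2*p).factorial : ℚ)/(((2*p+1-2*k)).factorial : ℚ) *
            (2^(2*k-1) * (Polynomial.bernoulli (2*k)).eval (2⁻¹ : ℚ) /
              ((2*k).factorial : ℚ)) : ℚ)) : ℝ) := by
    refine Finset.sum_congr rfl fun k hk => ?_
    obtain ⟨hk1, hk2⟩ := Finset.mem_Icc.mp hk
    obtain ⟨j, rfl⟩ : ∃ j, k = j + 1 := ⟨k - 1, by omega⟩
    rw [etaR_eq (j+1) (by omega)]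
    have hπ : (π:ℝ) ≠ 0 := Real.pi_ne_zero
    have hf1 : ((2*p+1-2*(j+1)).factorial : ℝ) ≠ 0 :=
      Nat.cast_ne_zero.mpr (Nat.factorial_ne_zero _)
    have hf2 : (((2*(j+1))).factorial : ℝ) ≠ 0 :=
      Nat.cast_ne_zero.mpr (Nat.factorial_ne_zero _)
    have hsgn : (-1:ℝ)^(j+1+1) = (-1)^j := by rw [pow_succ, pow_succ]; ring
    have hp2 : (2:ℝ)^(2*(j+1)) = 2 * 2^(2*(j+1)-1) := by
      have h := pow_succ' (2:ℝ) (2*(j+1)-1)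
      rw [show (2*(j+1)-1)+1 = 2*(j+1) by omega] at h
      exact h
    push_cast
    simp only [Nat.add_sub_cancel, hsgn, mul_pow, hp2]
    rcases Nat.even_or_odd j with hj | hj
    · rw [hj.neg_one_pow]
      field_simp <;> ring
    · rw [hj.neg_one_pow]
      field_simp <;> ring
  rw [hsum, Finset.sum_neg_distrib, ← Rat.cast_sum, key]
  push_cast
  ring
end

section
/- For every positive integer p ≥ 2, the quantity A_p := η(2p)/π^{2p} satisfies the recurrence A_p = ((−1)^{p−1}/(2p)!) · ( 1/(2(2p+1)) − Σ_{k=1}^{p−1} (−1)^{k−1} · (2p)!/(2p+1−2k)! · A_k ), with A_1 = 1/12. -/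
open scoped BigOperators
open Real

noncomputable def A (p : ℕ) : ℝ := etaR (2 * p) / π ^ (2 * p)

section Aux
open PowerSeries Finset

lemma exp_sub_one_ne_zero : exp ℚ - 1 ≠ 0 := by
  intro h
  have := congrArg (coeff 1) h
  simp [coeff_exp] at this

lemma rescale_two_mul_exp :
    rescale (2:ℚ) (bernoulliPowerSeries ℚ) * exp ℚ
      = C (2:ℚ) * bernoulliPowerSeries ℚ - rescale (2:ℚ) (bernoulliPowerSeries ℚ) := by
  have h1 := bernoulliPowerSeries_mul_exp_sub_one ℚ
  have h2 : rescale (2:ℚ) (bernoulliPowerSeries ℚ) * (exp ℚ * exp ℚ - 1) = C (2:ℚ) * X := by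
    have h := congrArg (rescale (2:ℚ)) h1
    rw [map_mul, map_sub, map_one, rescale_X] at h
    rw [← h]
    congr 1
    have e2 : (2:ℚ) = 1 + 1 := by norm_num
    rw [e2, ← exp_mul_exp_eq_exp_add (1:ℚ) 1, rescale_one]
    rfl
  have h3 : (rescale (2:ℚ) (bernoulliPowerSeries ℚ) * (exp ℚ + 1)) * (exp ℚ - 1)
      = (C (2:ℚ) * bernoulliPowerSeries ℚ) * (exp ℚ - 1) := by
    calc (rescale (2:ℚ) (bernoulliPowerSeries ℚ) * (exp ℚ + 1)) * (exp ℚ - 1)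
        = rescale (2:ℚ) (bernoulliPowerSeries ℚ) * (exp ℚ * exp ℚ - 1) := by ring
      _ = C (2:ℚ) * X := h2
      _ = C (2:ℚ) * (bernoulliPowerSeries ℚ * (exp ℚ - 1)) := by rw [h1]
      _ = (C (2:ℚ) * bernoulliPowerSeries ℚ) * (exp ℚ - 1) := by ring
  have h4 := mul_right_cancel₀ exp_sub_one_ne_zero h3
  linear_combination h4


lemma sum_choose_two_pow_bernoulli (n : ℕ) :
    ∑ j ∈ range (n+1), (n.choose j : ℚ) * 2^j * bernoulli j
      = (2 - 2^n) * bernoulli n := by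
  have h := congrArg (coeff n) rescale_two_mul_exp
  rw [coeff_mul, map_sub, Nat.sum_antidiagonal_eq_sum_range_succ_mk] at h
  simp only [coeff_rescale, coeff_C_mul, bernoulliPowerSeries, coeff_mk, coeff_exp,
    Algebra.algebraMap_self, RingHom.id_apply] at h
  have h2 : (n.factorial : ℚ) * ∑ j ∈ range (n+1),
      2 ^ j * (bernoulli j / j.factorial) * (1 / (n - j).factorial)
      = (n.factorial : ℚ) * (2 * (bernoulli n / n.factorial)
          - 2 ^ n * (bernoulli n / n.factorial)) := by rw [h]
  rw [Finset.mul_sum] at h2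
  have key : ∀ j ∈ range (n+1), (n.factorial : ℚ) *
      (2 ^ j * (bernoulli j / j.factorial) * (1 / (n - j).factorial))
      = (n.choose j : ℚ) * 2^j * bernoulli j := by
    intro j hj
    have hjn : j ≤ n := Nat.lt_succ_iff.mp (Finset.mem_range.mp hj)
    have hfac : (n.choose j : ℚ) * j.factorial * (n-j).factorial = n.factorial := by
      exact_mod_cast congrArg (Nat.cast (R := ℚ))
        (Nat.choose_mul_factorial_mul_factorial hjn)
    have h1 : (j.factorial : ℚ) ≠ 0 := Nat.cast_ne_zero.mpr j.factorial_ne_zero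
    have h2 : ((n-j).factorial : ℚ) ≠ 0 := Nat.cast_ne_zero.mpr (n-j).factorial_ne_zero
    field_simp
    linear_combination (-bernoulli j) * hfac
  rw [Finset.sum_congr rfl key] at h2
  rw [h2]
  have hn : (n.factorial : ℚ) ≠ 0 := Nat.cast_ne_zero.mpr n.factorial_ne_zero
  field_simp


lemma bernoulli_odd_zero {m : ℕ} (h : Odd m) (h1 : 1 < m) : bernoulli m = 0 := by
  rw [bernoulli, bernoulli'_eq_zero_of_odd h h1, mul_zero]

lemma pair_sum (f : ℕ → ℚ) (p : ℕ) :
    ∑ j ∈ range (2*p+2), f j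
      = f 0 + f 1 + ∑ k ∈ Finset.Icc 1 p, (f (2*k) + f (2*k+1)) := by
  induction p with
  | zero => simp [Finset.sum_range_succ]
  | succ p ih =>
    have hr : 2*(p+1)+2 = (2*p+2) + 1 + 1 := by ring
    rw [hr, Finset.sum_range_succ, Finset.sum_range_succ, ih,
      Finset.sum_Icc_succ_top (by omega : 1 ≤ p + 1)]
    have h3 : f (2*(p+1)) = f (2*p+2) := by rw [show 2*(p+1) = 2*p+2 by ring]
    have h4 : f (2*(p+1)+1) = f (2*p+3) := by rw [show 2*(p+1)+1 = 2*p+3 by ring]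
    rw [h3, h4]; ring

lemma qkey (p : ℕ) (hp : 1 ≤ p) :
    ∑ k ∈ Finset.Icc 1 p, (((2*p+1).choose (2*k)) : ℚ)
        * ((2^(2*k) - 2) * bernoulli (2*k)) = 1 := by
  set n := 2*p+1 with hn
  have hBn : bernoulli n = 0 := bernoulli_odd_zero ⟨p, by omega⟩ (by omega)
  have h2 := sum_choose_two_pow_bernoulli n
  rw [hBn, mul_zero] at h2
  have h3 : ∑ j ∈ range (n+1), (n.choose j : ℚ) * bernoulli j = 0 := by
    rw [Finset.sum_range_succ, sum_bernoulli, Nat.choose_self, hBn]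
    simp [hn]
    omega
  set f : ℕ → ℚ := fun j => (n.choose j : ℚ) * ((2^j - 2) * bernoulli j) with hf
  have hsum : ∑ j ∈ range (n+1), f j = 0 := by
    have : ∀ j ∈ range (n+1), f j
        = (n.choose j : ℚ) * 2^j * bernoulli j - 2 * ((n.choose j : ℚ) * bernoulli j) := by
      intro j _; simp only [hf]; ring
    rw [Finset.sum_congr rfl this, Finset.sum_sub_distrib, h2, ← Finset.mul_sum, h3]
    ring
  have hnp : n + 1 = 2*p + 2 := by omega
  rw [hnp, pair_sum f p] at hsum
  have hf0 : f 0 = -1 := by simp [hf]; norm_num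
  have hf1 : f 1 = 0 := by simp [hf]
  have hfodd : ∀ k ∈ Finset.Icc 1 p, f (2*k) + f (2*k+1) = f (2*k) := by
    intro k hk
    have hk1 : 1 ≤ k := (Finset.mem_Icc.mp hk).1
    have : bernoulli (2*k+1) = 0 := bernoulli_odd_zero ⟨k, by omega⟩ (by omega)
    simp [hf, this]
  rw [Finset.sum_congr rfl hfodd, hf0, hf1] at hsum
  have := hsum
  simp only [hf] at this
  linarith [this]

end Aux

lemma A_eq (k : ℕ) (hk : 1 ≤ k) :
    A k = (-1 : ℝ)^(k-1) * (((2^(2*k) - 2 : ℚ) * bernoulli (2*k) : ℚ) : ℝ)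
      / (2 * ((2*k).factorial : ℝ)) := by
  have hk0 : k ≠ 0 := by omega
  set Z : ℝ := (-1 : ℝ) ^ (k + 1) * (2 : ℝ) ^ (2 * k - 1) * π ^ (2 * k) *
        (bernoulli (2 * k) : ℝ) / ((2 * k).factorial : ℝ) with hZ
  have h0 : HasSum (fun n : ℕ => 1 / (n : ℝ) ^ (2 * k)) Z := hasSum_zeta_nat hk0
  -- shift by one
  have h' : HasSum (fun n : ℕ => 1 / (((n + 1 : ℕ)) : ℝ) ^ (2 * k)) Z := by
    rw [hasSum_nat_add_iff (f := fun n : ℕ => 1 / (n : ℝ) ^ (2 * k)) 1]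
    simpa [Finset.sum_range_one, zero_pow (by omega : 2*k ≠ 0)] using h0
  have h : HasSum (fun n : ℕ => 1 / ((n : ℝ) + 1) ^ (2 * k)) Z := by
    convert h' using 2 with n
    push_cast; ring_nf
  -- odd part
  have hodd : HasSum (fun m : ℕ => 1 / ((2*(m:ℝ)+1) + 1) ^ (2 * k)) (((2:ℝ)^(2*k))⁻¹ * Z) := by
    have h2 := h.mul_left ((2:ℝ)^(2*k))⁻¹
    convert h2 using 2 with m
    · rfl
    have : ((2*(m:ℝ)+1) + 1) ^ (2*k) = 2^(2*k) * ((m:ℝ)+1)^(2*k) := by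
      rw [← mul_pow]; ring_nf
    rw [this]
    field_simp
  -- even part summable
  have hesum : Summable (fun m : ℕ => 1 / ((2*(m:ℝ))+1) ^ (2 * k)) := by
    have hinj : Function.Injective (fun m : ℕ => 2*m) := by
      intro a b hab; simpa using hab
    have := h.summable.comp_injective hinj
    convert this using 2 with m
    · rfl
    simp only [Function.comp]
    push_cast; ring_nf
  set a : ℝ := ∑' m : ℕ, 1 / ((2*(m:ℝ))+1) ^ (2 * k) with ha
  have heven : HasSum (fun m : ℕ => 1 / ((2*(m:ℝ))+1) ^ (2 * k)) a := hesum.hasSum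
  -- combine into full sum
  have hcomb : HasSum (fun n : ℕ => 1 / ((n : ℝ) + 1) ^ (2 * k)) (a + ((2:ℝ)^(2*k))⁻¹ * Z) := by
    apply HasSum.even_add_odd
    · convert heven using 2 with m; push_cast; ring_nf
    · convert hodd using 2 with m; push_cast; ring_nf
  have haval : a = Z - ((2:ℝ)^(2*k))⁻¹ * Z := by
    have := h.unique hcomb
    linarith
  -- eta hasSum
  have heta : HasSum (fun n : ℕ => (-1:ℝ)^n / ((n : ℝ) + 1) ^ (2 * k))
      (a + (-(((2:ℝ)^(2*k))⁻¹ * Z))) := by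
    apply HasSum.even_add_odd
    · convert heven using 2 with m
      rw [pow_mul]; push_cast; ring_nf
    · convert hodd.neg using 2 with m
      · rfl
      rw [pow_succ, pow_mul]
      push_cast; ring_nf
  have hetaval : etaR (2*k) = Z - 2 * ((2:ℝ)^(2*k))⁻¹ * Z := by
    rw [etaR, heta.tsum_eq, haval]; ring
  -- final algebra
  rw [A, hetaval, hZ]
  have hpi : (π : ℝ) ^ (2*k) ≠ 0 := pow_ne_zero _ pi_ne_zero
  have hfac : ((2*k).factorial : ℝ) ≠ 0 := Nat.cast_ne_zero.mpr (Nat.factorial_ne_zero _)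
  have h2k : ((2:ℝ))^(2*k) ≠ 0 := by positivity
  have hpow : (2:ℝ)^(2*k) = 2^(2*k-1) * 2 := by
    rw [← pow_succ]; congr 1; omega
  have hsign : (-1:ℝ)^(k+1) = (-1:ℝ)^(k-1) := by
    rw [show k+1 = (k-1)+2 by omega, pow_add]; norm_num
  push_cast
  rw [← hsign]
  field_simp
  rw [hpow]
  ring


lemma term_eq (p k : ℕ) (hk : 1 ≤ k) (hkp : k ≤ p) :
    (-1:ℝ)^(k-1) * (((2*p).factorial : ℝ) / (((2*p+1-2*k).factorial : ℝ))) * A k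
      = (((2*p+1).choose (2*k) : ℝ) * (((2^(2*k) - 2 : ℚ) * bernoulli (2*k) : ℚ) : ℝ))
        / (2*(2*(p:ℝ)+1)) := by
  rw [A_eq k hk]
  set c : ℝ := (((2^(2*k) - 2 : ℚ) * bernoulli (2*k) : ℚ) : ℝ) with hc
  have hch : ((2*p+1).choose (2*k) * (2*k).factorial * (2*p+1-2*k).factorial)
      = (2*p+1).factorial := Nat.choose_mul_factorial_mul_factorial (by omega)
  have hchR : (((2*p+1).choose (2*k) : ℝ)) * ((2*k).factorial : ℝ) * ((2*p+1-2*k).factorial : ℝ)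
      = (2*(p:ℝ)+1) * ((2*p).factorial : ℝ) := by
    have := congrArg (Nat.cast (R := ℝ)) hch
    push_cast [Nat.factorial_succ (2*p)] at this ⊢
    linarith [this]
  have h1 : ((2*k).factorial : ℝ) ≠ 0 := Nat.cast_ne_zero.mpr (Nat.factorial_ne_zero _)
  have h2 : ((2*p+1-2*k).factorial : ℝ) ≠ 0 := Nat.cast_ne_zero.mpr (Nat.factorial_ne_zero _)
  have h3 : (2*(p:ℝ)+1) ≠ 0 := by positivity
  rcases Nat.even_or_odd (k-1) with hpar | hpar
  · rw [hpar.neg_one_pow]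
    field_simp
    linear_combination (-c) * hchR
  · rw [hpar.neg_one_pow]
    field_simp
    linear_combination (-c) * hchR

theorem stmt3 (p : ℕ) (hp : 2 ≤ p) :
    A p = ((-1 : ℝ) ^ (p - 1) / ((2 * p).factorial : ℝ)) *
        (1 / (2 * (2 * (p : ℝ) + 1))
          - ∑ k ∈ Finset.Icc 1 (p - 1), (-1 : ℝ) ^ (k - 1) *
              (((2 * p).factorial : ℝ) / ((2 * p + 1 - 2 * k).factorial : ℝ)) * A k)
      ∧ A 1 = 1 / 12 := by
  constructor
  · obtain ⟨q, rfl⟩ : ∃ q, p = q + 1 := ⟨p-1, by omega⟩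
    have hq : 1 ≤ q := by omega
    have hsumQ := qkey (q+1) (by omega)
    rw [Finset.sum_Icc_succ_top (by omega : 1 ≤ q + 1)] at hsumQ
    have hsum : ∑ k ∈ Finset.Icc 1 q, ((2*(q+1)+1).choose (2*k) : ℝ)
          * (((2^(2*k) - 2 : ℚ) * bernoulli (2*k) : ℚ) : ℝ)
        = 1 - (2*((q:ℝ)+1)+1) * (((2^(2*(q+1)) - 2 : ℚ) * bernoulli (2*(q+1)) : ℚ) : ℝ) := by
      have hch : ((2*(q+1)+1).choose (2*(q+1))) = 2*(q+1)+1 :=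
        Nat.choose_succ_self_right (2*(q+1))
      have := congrArg (Rat.cast (K := ℝ)) hsumQ
      push_cast [hch] at this
      push_cast
      linarith [this]
    have hps : q + 1 - 1 = q := rfl
    rw [hps]
    have hterm : ∀ k ∈ Finset.Icc 1 q,
        (-1:ℝ)^(k-1) * (((2*(q+1)).factorial : ℝ) / (((2*(q+1)+1-2*k).factorial : ℝ))) * A k
          = (((2*(q+1)+1).choose (2*k) : ℝ)
              * (((2^(2*k) - 2 : ℚ) * bernoulli (2*k) : ℚ) : ℝ)) / (2*(2*((q+1:ℕ):ℝ)+1)) := by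
      intro k hk
      have := Finset.mem_Icc.mp hk
      exact term_eq (q+1) k this.1 (by omega)
    rw [Finset.sum_congr rfl hterm, ← Finset.sum_div]
    rw [A_eq (q+1) (by omega), hps]
    have hfac : ((2*(q+1)).factorial : ℝ) ≠ 0 := Nat.cast_ne_zero.mpr (Nat.factorial_ne_zero _)
    have hden : (2*(((q+1:ℕ)):ℝ)+1) ≠ 0 := by push_cast; positivity
    set c : ℝ := (((2^(2*(q+1)) - 2 : ℚ) * bernoulli (2*(q+1)) : ℚ) : ℝ) with hc
    push_cast at hsum ⊢
    rw [hsum]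
    field_simp
    ring
  · rw [A_eq 1 le_rfl]
    norm_num [bernoulli, bernoulli'_two, Nat.factorial]
end

section
/- For every positive integer p ≥ 2, the quantity B_p := ζ(2p)/π^{2p} satisfies the recurrence B_p = ((−1)^{p−1}/(2p)!) · ( p/(2p+1) − Σ_{k=1}^{p−1} (−1)^{k−1} · (2p)!/(2p+1−2k)! · B_k ), with B_1 = 1/6. -/
open scoped BigOperators
open Real

noncomputable def B (p : ℕ) : ℝ := zetaR (2 * p) / π ^ (2 * p)

open Polynomial Finset

lemma bernSymm (m : ℕ) :
    (Polynomial.bernoulli m).comp (1 - X) = (-1 : ℚ) ^ m • Polynomial.bernoulli m := by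
  induction m with
  | zero => simp
  | succ m ih =>
    set Q : ℚ[X] := (Polynomial.bernoulli (m+1)).comp (1 - X)
        - (-1 : ℚ) ^ (m+1) • Polynomial.bernoulli (m+1) with hQ
    have hd : derivative Q = 0 := by
      rw [hQ, derivative_sub, derivative_comp_one_sub_X, derivative_smul,
        Polynomial.derivative_bernoulli_add_one, mul_comp, ih]
      simp only [natCast_comp, add_comp, one_comp, smul_eq_C_mul]
      simp only [map_neg, map_pow, map_one]
      ring
    have hdeg : Q.natDegree = 0 := natDegree_eq_zero_of_derivative_eq_zero hd
    have hC : Q = C (Q.coeff 0) := (Polynomial.eq_C_of_natDegree_eq_zero hdeg)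
    have he : Q.eval 0 = 0 := by
      rw [hQ]
      simp only [eval_sub, eval_comp, eval_sub, eval_one, eval_X, sub_zero, eval_smul,
        Polynomial.bernoulli_eval_one, Polynomial.bernoulli_eval_zero, smul_eq_mul]
      rcases eq_or_ne (m+1) 1 with h1 | h1
      · rw [h1]; norm_num
      · rw [bernoulli_eq_bernoulli'_of_ne_one h1]
        rcases Nat.even_or_odd (m+1) with h2 | h2
        · rw [h2.neg_one_pow]; ring
        · rw [bernoulli'_eq_zero_of_odd h2 (by omega)]; ring
    have hQ0 : Q = 0 := by rw [hC] at he ⊢; simpa using he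
    exact sub_eq_zero.mp hQ0

lemma bernHalf {m : ℕ} (hm : Odd m) :
    (Polynomial.bernoulli m).eval (1/2 : ℚ) = 0 := by
  have h := congrArg (eval (1/2 : ℚ)) (bernSymm m)
  simp only [eval_comp, eval_sub, eval_one, eval_X, eval_smul, smul_eq_mul, hm.neg_one_pow] at h
  norm_num at h
  linarith

lemma sumTwoPow {m : ℕ} (hm : Odd m) :
    ∑ i ∈ range (m+1), (_root_.bernoulli i * (m.choose i) * 2^i : ℚ) = 0 := by
  have hsymm := bernHalf hm
  rw [Polynomial.bernoulli, eval_finset_sum] at hsymm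
  simp only [eval_monomial] at hsymm
  have h2 : ∑ i ∈ range (m+1), (_root_.bernoulli i * (m.choose i) * 2^i : ℚ)
      = (2:ℚ)^m * ∑ i ∈ range (m+1), (_root_.bernoulli i * (m.choose i) * (1/2 : ℚ)^(m-i)) := by
    rw [Finset.mul_sum]
    refine Finset.sum_congr rfl fun i hi => ?_
    have hi' : i ≤ m := by simpa [Nat.lt_succ_iff] using hi
    have h4 : (2:ℚ)^m = 2^i * 2^(m-i) := by rw [← pow_add]; congr 1; omega
    have h5 : (2:ℚ)^(m-i) * (1/2:ℚ)^(m-i) = 1 := by rw [← mul_pow]; norm_num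
    rw [h4]
    calc (_root_.bernoulli i * (m.choose i) * 2^i : ℚ)
        = _root_.bernoulli i * (m.choose i) * 2^i * ((2:ℚ)^(m-i) * (1/2:ℚ)^(m-i)) := by
          rw [h5]; ring
      _ = (2:ℚ)^i * 2^(m-i) * (_root_.bernoulli i * (m.choose i) * (1/2:ℚ)^(m-i)) := by ring
  rw [h2, hsymm, mul_zero]

lemma mySumPair (f : ℕ → ℚ) (n : ℕ) :
    ∑ i ∈ range (2*n), f i = ∑ j ∈ range n, (f (2*j) + f (2*j+1)) := by
  induction n with
  | zero => simp
  | succ n ih =>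
    have h : 2*(n+1) = (2*n+1)+1 := by omega
    rw [h, Finset.sum_range_succ, Finset.sum_range_succ, ih, Finset.sum_range_succ]
    ring

lemma bernoulliOddZero {n : ℕ} (h : Odd n) (h1 : 1 < n) : (_root_.bernoulli n : ℚ) = 0 := by
  rw [bernoulli_eq_bernoulli'_of_ne_one (by omega)]
  exact bernoulli'_eq_zero_of_odd h h1

lemma keyQ_s7 (p : ℕ) :
    ∑ j ∈ range p, (_root_.bernoulli (2*j+2) * ((2*p+1).choose (2*j+2)) * 4^(j+1) : ℚ)
      = 2*p := by
  have hodd : Odd (2*p+1) := ⟨p, by ring⟩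
  have h0 := sumTwoPow hodd
  have h1 : 2*p+1+1 = 2*(p+1) := by omega
  rw [h1, mySumPair] at h0
  rw [Finset.sum_range_succ'] at h0
  have h3 : ∀ j ∈ range p,
      (_root_.bernoulli (2*(j+1)) * ((2*p+1).choose (2*(j+1))) * 2^(2*(j+1))
        + _root_.bernoulli (2*(j+1)+1) * ((2*p+1).choose (2*(j+1)+1)) * 2^(2*(j+1)+1) : ℚ)
      = _root_.bernoulli (2*j+2) * ((2*p+1).choose (2*j+2)) * 4^(j+1) := by
    intro j _
    have hz : (_root_.bernoulli (2*(j+1)+1) : ℚ) = 0 :=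
      bernoulliOddZero ⟨j+1, by ring⟩ (by omega)
    have h4 : (4:ℚ)^(j+1) = 2^(2*(j+1)) := by rw [pow_mul]; norm_num
    have h5 : 2*(j+1) = 2*j+2 := by ring
    rw [hz, h4, h5]
    ring
  rw [Finset.sum_congr rfl h3] at h0
  have h6 : (_root_.bernoulli (2*0) * ((2*p+1).choose (2*0)) * 2^(2*0)
      + _root_.bernoulli (2*0+1) * ((2*p+1).choose (2*0+1)) * 2^(2*0+1) : ℚ)
      = 1 - (2*(p:ℚ)+1) := by
    simp [_root_.bernoulli_one, Nat.choose_one_right]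
    push_cast
    ring
  rw [h6] at h0
  push_cast at h0 ⊢
  linarith


lemma B_eq (p : ℕ) (hp : p ≠ 0) :
    B p = (-1:ℝ)^(p+1) * 2^(2*p-1) * ((_root_.bernoulli (2*p) : ℚ) : ℝ)
      / ((2*p).factorial : ℝ) := by
  have h := hasSum_zeta_nat hp
  set S : ℝ := (-1 : ℝ) ^ (p + 1) * (2 : ℝ) ^ (2 * p - 1) * π ^ (2 * p) *
      ((_root_.bernoulli (2 * p) : ℚ) : ℝ) / ((2 * p).factorial : ℝ) with hS
  have h2 : HasSum (fun n : ℕ => 1 / ((n:ℝ)+1)^(2*p)) S := by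
    have h3 := (hasSum_nat_add_iff' (f := fun n : ℕ => 1/(n:ℝ)^(2*p)) 1).mpr h
    simp only [Finset.range_one, Finset.sum_singleton, Nat.cast_zero] at h3
    rw [zero_pow (by omega), div_zero, sub_zero] at h3
    convert h3 using 2 with n
    · rfl
    · norm_num
  have hz : zetaR (2*p) = S := h2.tsum_eq
  rw [B, hz, hS]
  have hπ : (π:ℝ)^(2*p) ≠ 0 := pow_ne_zero _ pi_ne_zero
  have hf : ((2*p).factorial : ℝ) ≠ 0 := Nat.cast_ne_zero.mpr (Nat.factorial_pos _).ne'
  field_simp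

theorem stmt7 (p : ℕ) (hp : 2 ≤ p) :
    B p = ((-1 : ℝ) ^ (p - 1) / ((2 * p).factorial : ℝ)) *
        ((p : ℝ) / (2 * (p : ℝ) + 1)
          - ∑ k ∈ Finset.Icc 1 (p - 1), (-1 : ℝ) ^ (k - 1) *
              (((2 * p).factorial : ℝ) / ((2 * p + 1 - 2 * k).factorial : ℝ)) * B k)
      ∧ B 1 = 1 / 6 := by
  have hf2p : ((2*p).factorial : ℝ) ≠ 0 := Nat.cast_ne_zero.mpr (Nat.factorial_pos _).ne'
  constructor
  · -- main recurrence
    rw [← Finset.Ico_add_one_right_eq_Icc, show (p-1)+1 = p by omega, Finset.sum_Ico_eq_sum_range]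
    have hterm : ∀ i ∈ range (p-1),
        ((-1:ℝ)^((1+i)-1) * (((2*p).factorial:ℝ)/(((2*p+1-2*(1+i)).factorial:ℝ))) * B (1+i))
        = ((2*p+1).choose (2*i+2) : ℝ) * 4^(i+1) * ((_root_.bernoulli (2*i+2) : ℚ):ℝ)
            / (2*(2*(p:ℝ)+1)) := by
      intro i hi
      have hi' : i < p - 1 := Finset.mem_range.mp hi
      have h5 : 2*(1+i) = 2*i+2 := by ring
      have h6 : (1+i) - 1 = i := by omega
      have h7 : 2*i+2-1 = 2*i+1 := by omega
      have hsub : 2*p+1-(2*i+2) = 2*p-(2*i+1) := by omega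
      rw [B_eq (1+i) (by omega), h5, h6, h7, hsub]
      have hfac := Nat.choose_mul_factorial_mul_factorial
        (show 2*i+2 ≤ 2*p+1 by omega)
      have hfs : (2*p+1).factorial = (2*p+1) * (2*p).factorial := Nat.factorial_succ _
      have hfacR : ((2*p+1).choose (2*i+2) : ℝ) * ((2*i+2).factorial : ℝ)
          * ((2*p-(2*i+1)).factorial : ℝ) = (2*(p:ℝ)+1) * ((2*p).factorial : ℝ) := by
        have h9 := congrArg (fun n : ℕ => (n:ℝ)) hfac
        rw [hfs] at h9
        push_cast at h9
        exact h9
      have hsign : (-1:ℝ)^i * (-1:ℝ)^(1+i+1) = 1 := by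
        rw [← pow_add]; exact Even.neg_one_pow ⟨i+1, by ring⟩
      have h4p : (4:ℝ)^(i+1) = 2 * 2^(2*i+1) := by
        have : (4:ℝ)^(i+1) = 2^(2*(i+1)) := by rw [pow_mul]; norm_num
        rw [this, show 2*(i+1) = (2*i+1)+1 by ring, pow_succ]; ring
      have hne1 : ((2*p-(2*i+1)).factorial : ℝ) ≠ 0 :=
        Nat.cast_ne_zero.mpr (Nat.factorial_pos _).ne'
      have hne2 : ((2*i+2).factorial : ℝ) ≠ 0 :=
        Nat.cast_ne_zero.mpr (Nat.factorial_pos _).ne'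
      calc (-1:ℝ)^i * (((2*p).factorial:ℝ)/(((2*p-(2*i+1)).factorial:ℝ)))
            * ((-1:ℝ)^(1+i+1) * 2^(2*i+1) * ((_root_.bernoulli (2*i+2) : ℚ):ℝ)
              / ((2*i+2).factorial : ℝ))
          = ((-1:ℝ)^i * (-1:ℝ)^(1+i+1)) * ((((2*p).factorial:ℝ)/(((2*p-(2*i+1)).factorial:ℝ)))
              * (2^(2*i+1) * ((_root_.bernoulli (2*i+2) : ℚ):ℝ) / ((2*i+2).factorial : ℝ))) := by
            ring
        _ = ((2*p+1).choose (2*i+2) : ℝ) * 4^(i+1) * ((_root_.bernoulli (2*i+2) : ℚ):ℝ)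
            / (2*(2*(p:ℝ)+1)) := by
            rw [hsign, one_mul, h4p]
            field_simp
            linear_combination (-((_root_.bernoulli (2*i+2) : ℚ):ℝ)) * hfacR
    rw [Finset.sum_congr rfl hterm, ← Finset.sum_div]
    have kR : ∑ j ∈ range p, (((2*p+1).choose (2*j+2)):ℝ) * 4^(j+1)
        * ((_root_.bernoulli (2*j+2) : ℚ):ℝ) = 2*(p:ℝ) := by
      calc ∑ j ∈ range p, (((2*p+1).choose (2*j+2)):ℝ) * 4^(j+1)
            * ((_root_.bernoulli (2*j+2) : ℚ):ℝ)
          = ∑ j ∈ range p, (((_root_.bernoulli (2*j+2) : ℚ):ℝ)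
            * (((2*p+1).choose (2*j+2)):ℝ) * 4^(j+1)) :=
            Finset.sum_congr rfl (fun j _ => by ring)
        _ = 2*(p:ℝ) := by exact_mod_cast congrArg (fun q : ℚ => (q:ℝ)) (keyQ_s7 p)
    have ksplit : ∑ i ∈ range (p-1), ((((2*p+1).choose (2*i+2)):ℝ) * 4^(i+1)
        * ((_root_.bernoulli (2*i+2) : ℚ):ℝ))
        = 2*(p:ℝ) - (2*(p:ℝ)+1) * 4^p * ((_root_.bernoulli (2*p) : ℚ):ℝ) := by
      have h10 : range p = range ((p-1)+1) := by rw [show (p-1)+1 = p by omega]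
      rw [h10, Finset.sum_range_succ, show 2*(p-1)+2 = 2*p by omega,
        show (p-1)+1 = p by omega] at kR
      have hch : (2*p+1).choose (2*p) = 2*p+1 := by
        have h11 := Nat.choose_symm (show 1 ≤ 2*p+1 by omega)
        simpa [Nat.choose_one_right] using h11
      rw [hch] at kR
      push_cast at kR
      linarith
    rw [ksplit, B_eq p (by omega)]
    have hsign2 : (-1:ℝ)^(p+1) = (-1:ℝ)^(p-1) := by
      rw [show p+1 = (p-1)+2 by omega, pow_add]; norm_num
    have h4p2 : (4:ℝ)^p = 2 * 2^(2*p-1) := by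
      have h1 : (4:ℝ)^p = 2^(2*p) := by rw [show (4:ℝ) = 2^2 by norm_num, ← pow_mul]
      have h2 : (2:ℝ)^(2*p) = 2^(2*p-1)*2 := by rw [← pow_succ]; congr 1; omega
      rw [h1, h2]; ring
    rw [hsign2, h4p2]
    have hne3 : (2*(p:ℝ)+1) ≠ 0 := by positivity
    field_simp
    ring
  · rw [B_eq 1 one_ne_zero]
    norm_num [bernoulli_eq_bernoulli'_of_ne_one, bernoulli'_two]
end

section
/- For every positive integer p, η(2p)/π^{2p} is a rational number, where η(s) = Σ_{n≥1} (−1)^{n−1}/n^s is the Dirichlet eta function. -/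
open scoped BigOperators
open Real

set_option maxHeartbeats 1000000 in
theorem stmt17 (p : ℕ) (hp : 0 < p) : ∃ q : ℚ, etaR (2 * p) / π ^ (2 * p) = (q : ℝ) := by
  set s := 2 * p with hs
  set Z : ℝ := (-1 : ℝ) ^ (p + 1) * (2 : ℝ) ^ (2 * p - 1) * π ^ (2 * p) *
        bernoulli (2 * p) / (Nat.factorial (2 * p)) with hZdef
  have hZ0 : HasSum (fun n : ℕ => 1 / (n : ℝ) ^ s) Z := hasSum_zeta_nat hp.ne'
  -- shift by one
  have hg : HasSum (fun n : ℕ => 1 / ((n : ℝ) + 1) ^ s) Z := by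
    have h1 := (hasSum_nat_add_iff' (f := fun n : ℕ => 1 / (n : ℝ) ^ s) 1).mpr hZ0
    have h0 : (1 : ℝ) / (0 : ℝ) ^ s = 0 := by
      rw [zero_pow (by omega : s ≠ 0)]; simp
    simp only [Finset.range_one, Finset.sum_singleton, Nat.cast_zero, h0, sub_zero] at h1
    convert h1 using 2 with n
    · rfl
    push_cast
    ring_nf
  -- even-denominator part: sum over n of 1/(2n+2)^s = (1/2^s) * Z
  have key : ∀ k : ℕ, (1 : ℝ) / (((2 * k + 1 : ℕ) : ℝ) + 1) ^ s
      = 1 / 2 ^ s * (1 / ((k : ℝ) + 1) ^ s) := by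
    intro k
    have h2 : ((2 * k + 1 : ℕ) : ℝ) + 1 = 2 * ((k : ℝ) + 1) := by push_cast; ring
    rw [h2, mul_pow]
    field_simp
  have hE : HasSum (fun k : ℕ => (fun n : ℕ => 1 / ((n : ℝ) + 1) ^ s) (2 * k + 1))
      ((1 / 2 ^ s) * Z) := by
    simpa only [key] using hg.mul_left (1 / 2 ^ s)
  -- odd-denominator part is summable
  have hOsum : Summable (fun k : ℕ => (fun n : ℕ => 1 / ((n : ℝ) + 1) ^ s) (2 * k)) :=
    hg.summable.comp_injective (fun a b h => by omega)
  set O : ℝ := ∑' k : ℕ, (fun n : ℕ => 1 / ((n : ℝ) + 1) ^ s) (2 * k) with hOdef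
  have hO : HasSum (fun k : ℕ => (fun n : ℕ => 1 / ((n : ℝ) + 1) ^ s) (2 * k)) O :=
    hOsum.hasSum
  have hsplit : O + (1 / 2 ^ s) * Z = Z := (hO.even_add_odd hE).unique hg
  -- eta
  have hη : HasSum (fun n : ℕ => (-1 : ℝ) ^ n / ((n : ℝ) + 1) ^ s)
      (O + (-((1 / 2 ^ s) * Z))) := by
    refine HasSum.even_add_odd ?_ ?_
    · convert hO using 2 with k
      simp [pow_mul]
    · convert hE.neg using 2 with k
      · rfl
      simp [pow_succ, pow_mul, neg_div, one_div]
  have hηval : etaR s = Z - 2 * ((1 / 2 ^ s) * Z) := by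
    rw [etaR, hη.tsum_eq]
    have : O = Z - (1 / 2 ^ s) * Z := by linarith [hsplit]
    rw [this]; ring
  -- Z = c * π ^ s with c rational
  obtain ⟨c, hZc⟩ : ∃ c : ℚ, Z = (c : ℝ) * π ^ s :=
    ⟨(-1 : ℚ) ^ (p + 1) * (2 : ℚ) ^ (2 * p - 1) * bernoulli (2 * p) /
        (Nat.factorial (2 * p)), by
      rw [hZdef]
      simp only [hs]
      push_cast
      ring⟩
  refine ⟨(1 - 2 * (1 / 2 ^ s)) * c, ?_⟩
  have hπ : (π : ℝ) ^ s ≠ 0 := pow_ne_zero _ Real.pi_ne_zero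
  rw [hηval, hZc]
  have hfac : (c : ℝ) * π ^ s - 2 * (1 / 2 ^ s * ((c : ℝ) * π ^ s))
      = ((1 - 2 * (1 / (2 : ℝ) ^ s)) * (c : ℝ)) * π ^ s := by ring
  rw [hfac, mul_div_assoc, div_self hπ, mul_one]
  push_cast
  ring
end

section
/- For every natural number p, β(2p+1)/π^{2p+1} is a rational number, where β(s) = Σ_{m=0}^∞ (−1)^m/(2m+1)^s is the Dirichlet beta function. -/
open scoped BigOperators
open Real
open scoped Nat

lemma beta_one_not_summable : ¬ Summable (fun m : ℕ => (-1 : ℝ) ^ m / (2 * (m : ℝ) + 1) ^ 1) := by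
  intro h
  rw [← summable_abs_iff] at h
  have h2 : Summable (fun m : ℕ => 1 / (2 * (m : ℝ) + 1)) := by
    refine h.congr fun m => ?_
    rw [abs_div, abs_pow, abs_neg, abs_one, one_pow, pow_one, abs_of_pos (by positivity)]
  have h3 : Summable (fun m : ℕ => 1 / (2 * ((m : ℝ) + 1))) := by
    refine Summable.of_nonneg_of_le (fun m => by positivity) (fun m => ?_) h2
    apply one_div_le_one_div_of_le (by positivity)
    linarith
  have h4 : Summable (fun m : ℕ => 1 / ((m : ℝ) + 1)) := by
    have := h3.mul_left 2
    refine this.congr fun m => ?_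
    field_simp
  have h5 : Summable (fun m : ℕ => 1 / ((m : ℝ))) :=
    (summable_nat_add_iff (f := fun n : ℕ => 1 / (n : ℝ)) 1).mp (h4.congr fun m => by push_cast; ring)
  exact Real.not_summable_one_div_natCast h5

theorem stmt18 (p : ℕ) : ∃ q : ℚ, betaR (2 * p + 1) / π ^ (2 * p + 1) = (q : ℝ) := by
  rcases eq_or_ne p 0 with rfl | hp
  · refine ⟨0, ?_⟩
    rw [betaR, tsum_eq_zero_of_not_summable (by simpa using beta_one_not_summable)]
    simp
  · have H := hasSum_one_div_nat_pow_mul_sin hp (x := (1/4 : ℝ)) ⟨by norm_num, by norm_num⟩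
    have hinj : Function.Injective (fun m : ℕ => 2 * m + 1) := fun a b h => by simp only [] at h; omega
    have hvanish : ∀ n ∉ Set.range (fun m : ℕ => 2 * m + 1),
        (1 / (n : ℝ) ^ (2 * p + 1) * Real.sin (2 * π * n * (1/4))) = 0 := by
      intro n hn
      have hev : ∃ m, n = 2 * m := by
        rcases Nat.even_or_odd n with ⟨m, hm⟩ | ⟨m, hm⟩
        · exact ⟨m, by omega⟩
        · exact absurd ⟨m, show 2 * m + 1 = n by omega⟩ hn
      obtain ⟨m, rfl⟩ := hev
      have : 2 * π * (2 * m : ℕ) * (1/4) = m * π := by push_cast; ring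
      rw [this, Real.sin_nat_mul_pi, mul_zero]
    have key : HasSum (fun m : ℕ => (-1 : ℝ) ^ m / (2 * (m : ℝ) + 1) ^ (2 * p + 1))
        ((-1 : ℝ) ^ (p + 1) * (2 * π) ^ (2 * p + 1) / 2 / (2 * p + 1)! *
          (Polynomial.map (algebraMap ℚ ℝ) (Polynomial.bernoulli (2 * p + 1))).eval (1/4 : ℝ)) := by
      refine ((hinj.hasSum_iff hvanish).mpr H).congr_fun fun m => ?_
      have h1 : 2 * π * ((2 * m + 1 : ℕ) : ℝ) * (1/4) = m * π - (- (π / 2)) := by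
        push_cast; ring
      simp only [Function.comp_apply, h1, Real.sin_nat_mul_pi_sub, Real.sin_neg,
        Real.sin_pi_div_two]
      push_cast
      ring
    have heval : (Polynomial.map (algebraMap ℚ ℝ) (Polynomial.bernoulli (2 * p + 1))).eval
        (1/4 : ℝ) = (((Polynomial.bernoulli (2 * p + 1)).eval (1/4 : ℚ) : ℚ) : ℝ) := by
      have h4 : (1/4 : ℝ) = algebraMap ℚ ℝ (1/4 : ℚ) := by norm_num
      rw [h4, Polynomial.eval_map, Polynomial.eval₂_at_apply]
      simp
    refine ⟨(-1 : ℚ) ^ (p + 1) * 2 ^ (2 * p + 1) / 2 / (2 * p + 1)! *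
      (Polynomial.bernoulli (2 * p + 1)).eval (1/4 : ℚ), ?_⟩
    rw [betaR, key.tsum_eq, heval]
    have hpi : (π : ℝ) ≠ 0 := Real.pi_ne_zero
    have hfac : ((2 * p + 1)! : ℝ) ≠ 0 := by positivity
    push_cast
    field_simp
    ring
end
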